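/- Suppose G is a countable group that is the union of an increasing sequence of its subgroups {G_i}_{i≥1} with the property that the index of G_i in G_{i+1} is infinite for each i ≥ 1. Then there is a left-invariant integral ultrametric d_G on G such that every separable metric space of asymptotic dimension 0 coarsely embeds into (G, d_G). -/

import Mathlib

/-- The distance of a metric space is an ultrametric. -/
def IsUltra (X : Type*) [MetricSpace X] : Prop :=
  ∀ x y z : X, dist x z ≤ max (dist x y) (dist y z)

/-- All distances of the metric space are non-negative integers. -/
def IsIntegralDist (X : Type*) [MetricSpace X] : Prop :=
  ∀ x y : X, ∃ n : ℕ, dist x y = n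

/-- The metric of the group `G` is left-invariant. -/
def LeftInvariantDist (G : Type*) [Group G] [MetricSpace G] : Prop :=
  ∀ g x y : G, dist (g * x) (g * y) = dist x y

/-- A metric space has asymptotic dimension `0` if for every `r > 0` the `r`-components of
the space (classes of the chain relation generated by `dist a b < r`) are uniformly
bounded. -/
def AsdimZero (X : Type*) [MetricSpace X] : Prop :=
  ∀ r : ℝ, r > 0 → ∃ B : ℝ, B > 0 ∧ ∀ x y : X,
    Relation.ReflTransGen (fun a b : X => dist a b < r) x y → dist x y ≤ B

/-- `f` is a coarse embedding: uniformly bornologous and uniformly proper. -/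
def CoarseEmbedding {X Y : Type*} [MetricSpace X] [MetricSpace Y] (f : X → Y) : Prop :=
  (∀ R : ℝ, R > 0 → ∃ S' : ℝ, S' > 0 ∧ ∀ x y : X, dist x y ≤ R → dist (f x) (f y) ≤ S') ∧
  (∀ R : ℝ, R > 0 → ∃ S' : ℝ, S' > 0 ∧ ∀ x y : X, dist (f x) (f y) ≤ R → dist x y ≤ S')

private lemma exists_coset_seq {G : Type*} [Group G] (H K : Subgroup G)
    (h : H.relIndex K = 0) :
    ∃ c : ℕ → G, c 0 = 1 ∧ (∀ k, c k ∈ K) ∧ ∀ k k', (c k)⁻¹ * c k' ∈ H → k = k' := by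
  haveI hinf : Infinite (↥K ⧸ H.subgroupOf K) := Subgroup.index_eq_zero_iff_infinite.mp h
  let e := Infinite.natEmbedding (↥K ⧸ H.subgroupOf K)
  have hrep : ∀ k : ℕ, ∃ g : K, (QuotientGroup.mk g : ↥K ⧸ H.subgroupOf K) = e k :=
    fun k => QuotientGroup.mk_surjective (e k)
  choose r hr using hrep
  refine ⟨fun k => (((r 0)⁻¹ * r k : K) : G), by simp, fun k => ((r 0)⁻¹ * r k).2, ?_⟩
  intro k k' hkk'
  have h2 : ((r k)⁻¹ * r k' : K) ∈ H.subgroupOf K := by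
    rw [Subgroup.mem_subgroupOf]
    convert hkk' using 1
    push_cast
    group
  have h3 : (QuotientGroup.mk (r k) : ↥K ⧸ H.subgroupOf K) = QuotientGroup.mk (r k') :=
    QuotientGroup.eq.mpr h2
  apply e.injective
  rw [← hr k, ← hr k', h3]

/-- Corollary 6.7: if `G` is a countable group that is the union of an increasing sequence of
subgroups `Gs i` with the index of `Gs i` in `Gs (i+1)` infinite for every `i`, then `G`
carries a left-invariant integral ultrametric making it a universal space in the category of
separable metric spaces of asymptotic dimension `0`. -/

theorem universal_group_for_separable_asdim_zero {G : Type*} [Group G] [Countable G]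
    (Gs : ℕ → Subgroup G) (hmono : Monotone Gs)
    (hindex : ∀ i : ℕ, (Gs i).relIndex (Gs (i + 1)) = 0)
    (hunion : ∀ g : G, ∃ i : ℕ, g ∈ Gs i) :
    ∃ _ : MetricSpace G, LeftInvariantDist G ∧ IsUltra G ∧ IsIntegralDist G ∧
      ∀ (X : Type u) (_ : MetricSpace X), TopologicalSpace.SeparableSpace X →
        AsdimZero X → ∃ f : X → G, CoarseEmbedding f := by
  classical
  let ν : G → ℕ := fun g => Nat.find (hunion g)
  have hν_spec : ∀ g, g ∈ Gs (ν g) := fun g => Nat.find_spec (hunion g)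
  have hν_le : ∀ g n, g ∈ Gs n → ν g ≤ n := fun g n h => Nat.find_le h
  have hν_mem : ∀ g n, ν g ≤ n → g ∈ Gs n := fun g n h => hmono h (hν_spec g)
  have hν_inv : ∀ g : G, ν g⁻¹ = ν g := by
    intro g
    apply le_antisymm
    · exact hν_le _ _ ((Gs (ν g)).inv_mem (hν_spec g))
    · exact hν_le _ _ (by simpa using (Gs (ν g⁻¹)).inv_mem (hν_spec g⁻¹))
  let D : G → G → ℕ := fun x y => if x = y then 0 else ν (x⁻¹ * y) + 1
  have hD_self : ∀ x, D x x = 0 := fun x => if_pos rfl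
  have hD_def : ∀ x y, x ≠ y → D x y = ν (x⁻¹ * y) + 1 := fun x y h => if_neg h
  have hD_eq : ∀ x y, D x y = 0 → x = y := by
    intro x y h
    by_contra hne
    rw [hD_def x y hne] at h
    omega
  have hD_comm : ∀ x y, D x y = D y x := by
    intro x y
    by_cases h : x = y
    · rw [h]
    · have h' : y ≠ x := fun e => h e.symm
      rw [hD_def x y h, hD_def y x h', ← hν_inv (x⁻¹ * y),
        show (x⁻¹ * y)⁻¹ = y⁻¹ * x by group]
  have hD_ultra : ∀ x y z, D x z ≤ max (D x y) (D y z) := by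
    intro x y z
    by_cases hxz : x = z
    · rw [hxz, hD_self]; omega
    by_cases hxy : x = y
    · rw [hxy]; exact le_max_right _ _
    by_cases hyz : y = z
    · rw [← hyz] at hxz ⊢; exact le_max_left _ _
    · rw [hD_def x z hxz, hD_def x y hxy, hD_def y z hyz]
      have hm : x⁻¹ * z ∈ Gs (max (ν (x⁻¹ * y)) (ν (y⁻¹ * z))) := by
        rw [show x⁻¹ * z = (x⁻¹ * y) * (y⁻¹ * z) by group]
        exact mul_mem (hν_mem _ _ (le_max_left _ _)) (hν_mem _ _ (le_max_right _ _))
      have := hν_le _ _ hm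
      omega
  letI mG : MetricSpace G :=
    { dist := fun x y => (D x y : ℝ)
      dist_self := fun x => by show (D x x : ℝ) = 0; rw [hD_self]; norm_num
      dist_comm := fun x y => by show (D x y : ℝ) = (D y x : ℝ); rw [hD_comm]
      dist_triangle := fun x y z => by
        show (D x z : ℝ) ≤ (D x y : ℝ) + (D y z : ℝ)
        have h := le_trans (hD_ultra x y z) (max_le (Nat.le_add_right _ _) (Nat.le_add_left _ _))
        exact_mod_cast h
      eq_of_dist_eq_zero := fun {x y} h => by
        have h' : (D x y : ℝ) = 0 := h
        exact hD_eq x y (by exact_mod_cast h') }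
  have hdistG : ∀ (g h : G) (n : ℕ), g⁻¹ * h ∈ Gs n → dist g h ≤ (n : ℝ) + 1 := by
    intro g h n hm
    show (D g h : ℝ) ≤ (n : ℝ) + 1
    by_cases he : g = h
    · rw [he, hD_self]; push_cast; positivity
    · rw [hD_def g h he]
      have h2 : ν (g⁻¹ * h) ≤ n := hν_le _ _ hm
      push_cast
      have : (ν (g⁻¹ * h) : ℝ) ≤ n := by exact_mod_cast h2
      linarith
  have hdistG' : ∀ (g h : G) (n : ℕ), dist g h ≤ (n : ℝ) + 1 → g⁻¹ * h ∈ Gs n := by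
    intro g h n hd
    by_cases he : g = h
    · rw [he]; simpa using (Gs n).one_mem
    · have h1 : (D g h : ℝ) ≤ (n : ℝ) + 1 := hd
      rw [hD_def g h he] at h1
      have h2 : ν (g⁻¹ * h) + 1 ≤ n + 1 := by exact_mod_cast h1
      exact hν_mem _ _ (by omega)
  refine ⟨mG, ?_, ?_, ?_, ?_⟩
  · -- left invariance
    intro g x y
    show (D (g * x) (g * y) : ℝ) = (D x y : ℝ)
    congr 1
    by_cases h : x = y
    · rw [h, hD_self, hD_self]
    · rw [hD_def _ _ (fun e => h (mul_left_cancel e)), hD_def x y h,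
        show (g * x)⁻¹ * (g * y) = x⁻¹ * y by group]
  · -- ultrametric
    intro x y z
    show (D x z : ℝ) ≤ max (D x y : ℝ) (D y z : ℝ)
    rw [← Nat.cast_max]
    exact_mod_cast hD_ultra x y z
  · -- integral
    exact fun x y => ⟨D x y, rfl⟩
  -- universality
  intro X mX hsep hA
  by_cases hne : Nonempty X
  swap
  · haveI : IsEmpty X := not_nonempty_iff.mp hne
    exact ⟨fun x => isEmptyElim x,
      fun R hR => ⟨1, one_pos, fun x => isEmptyElim x⟩,
      fun R hR => ⟨1, one_pos, fun x => isEmptyElim x⟩⟩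
  obtain ⟨x0⟩ := hne
  haveI : Nonempty X := ⟨x0⟩
  obtain ⟨s, hs⟩ := TopologicalSpace.exists_dense_seq X
  let E : ℕ → X → X → Prop := fun n x y =>
    Relation.ReflTransGen (fun a b : X => dist a b < (n : ℝ)) x y
  have hEsymm : ∀ n, Symmetric (E n) :=
    fun n a b h => (@Relation.ReflTransGen.symmetric X (fun a b : X => dist a b < (n : ℝ))
      ⟨fun a b h => by rwa [dist_comm] at h⟩).symm a b h
  have hEtrans : ∀ n {x y z : X}, E n x y → E n y z → E n x z := by
    intro n x y z hxy hyz
    exact Relation.ReflTransGen.trans hxy hyz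
  have hEmono : ∀ {n m : ℕ}, n ≤ m → ∀ {x y : X}, E n x y → E m x y := by
    intro n m hnm x y h
    exact Relation.ReflTransGen.mono
      (fun a b hab => lt_of_lt_of_le hab (by exact_mod_cast hnm)) x y h
  have hEsingle : ∀ (n : ℕ) (x y : X), dist x y < (n : ℝ) → E n x y :=
    fun n x y h => Relation.ReflTransGen.single h
  have hsk : ∀ (n : ℕ) (x : X), ∃ k, E (n + 1) x (s k) := by
    intro n x
    obtain ⟨k, hk⟩ := Metric.denseRange_iff.mp hs x 1 one_pos
    exact ⟨k, hEsingle _ _ _ (lt_of_lt_of_le hk (by exact_mod_cast Nat.succ_le_succ n.zero_le))⟩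
  let idx : ℕ → X → ℕ := fun n x => Nat.find (hsk n x)
  have hidx_spec : ∀ n x, E (n + 1) x (s (idx n x)) := fun n x => Nat.find_spec (hsk n x)
  have hidx_congr : ∀ n (x y : X), E (n + 1) x y → idx n x = idx n y := by
    intro n x y h
    apply le_antisymm
    · exact Nat.find_le (hEtrans _ h (hidx_spec n y))
    · exact Nat.find_le (hEtrans _ (hEsymm _ h) (hidx_spec n x))
  have hidx_eq : ∀ n (x y : X), idx n x = idx n y → E (n + 1) x y := by
    intro n x y h
    exact hEtrans _ (hidx_spec n x) (hEsymm _ (h ▸ hidx_spec n y))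
  let β : ℕ → X → ℕ := fun n x => if idx n x = idx n x0 then 0 else idx n x + 1
  have hβ_congr : ∀ n (x y : X), E (n + 1) x y → β n x = β n y := by
    intro n x y h
    show (if idx n x = idx n x0 then 0 else idx n x + 1)
      = (if idx n y = idx n x0 then 0 else idx n y + 1)
    rw [hidx_congr n x y h]
  have hβ_eq : ∀ n (x y : X), β n x = β n y → idx n x = idx n y := by
    intro n x y h
    by_cases h1 : idx n x = idx n x0 <;> by_cases h2 : idx n y = idx n x0 <;>
      simp only [β, if_pos, if_neg, h1, h2, if_true, if_false] at h ⊢ <;> omega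
  have hβ_zero : ∀ n (x : X), E (n + 1) x x0 → β n x = 0 := by
    intro n x h
    exact if_pos (hidx_congr n x x0 h)
  let K : X → ℕ := fun x => ⌈dist x x0⌉₊ + 1
  have hK : ∀ (x : X) (n : ℕ), K x ≤ n + 1 → β n x = 0 := by
    intro x n h
    apply hβ_zero
    apply hEmono h
    apply hEsingle
    calc dist x x0 ≤ (⌈dist x x0⌉₊ : ℝ) := Nat.le_ceil _
      _ < (K x : ℝ) := by simp only [K]; push_cast; linarith
  have hc : ∀ n : ℕ, ∃ c : ℕ → G, c 0 = 1 ∧ (∀ k, c k ∈ Gs (n + 1)) ∧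
      ∀ k k', (c k)⁻¹ * c k' ∈ Gs n → k = k' :=
    fun n => exists_coset_seq (Gs n) (Gs (n + 1)) (hindex n)
  choose c hc1 hc2 hc3 using hc
  let F : ℕ → X → G := fun M x =>
    Nat.rec (motive := fun _ => G) 1 (fun m ih => c m (β m x) * ih) M
  have hF_zero : ∀ x : X, F 0 x = 1 := fun x => rfl
  have hF_succ : ∀ (M : ℕ) (x : X), F (M + 1) x = c M (β M x) * F M x := fun M x => rfl
  have hF_mem : ∀ (M : ℕ) (x : X), F M x ∈ Gs M := by
    intro M x
    induction M with
    | zero => rw [hF_zero]; exact (Gs 0).one_mem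
    | succ M ih =>
      rw [hF_succ]
      exact mul_mem (hc2 M _) (hmono (Nat.le_succ M) ih)
  have hF_cancel : ∀ (n : ℕ) (x y : X), (∀ m, n ≤ m → β m x = β m y) →
      ∀ M, n ≤ M → (F M x)⁻¹ * F M y = (F n x)⁻¹ * F n y := by
    intro n x y hβ M
    induction M with
    | zero => intro h; rw [Nat.le_zero.mp h]
    | succ M ih =>
      intro h
      rcases eq_or_lt_of_le h with he | hlt
      · rw [he]
      · have hM : n ≤ M := Nat.lt_succ_iff.mp hlt
        have hstep : (F (M + 1) x)⁻¹ * F (M + 1) y = (F M x)⁻¹ * F M y := by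
          rw [hF_succ, hF_succ, hβ M hM]
          group
        rw [hstep]
        exact ih hM
  have hF_stab : ∀ (x : X) (M : ℕ), K x ≤ M → F M x = F (K x) x := by
    intro x M
    induction M with
    | zero => intro h; rw [Nat.le_zero.mp h]
    | succ M ih =>
      intro h
      rcases eq_or_lt_of_le h with he | hlt
      · rw [he]
      · have hM : K x ≤ M := Nat.lt_succ_iff.mp hlt
        rw [hF_succ, hK x M h, hc1 M, one_mul]
        exact ih hM
  let f : X → G := fun x => F (K x) x
  have hf : ∀ (x : X) (M : ℕ), K x ≤ M → f x = F M x := fun x M h => (hF_stab x M h).symm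
  have hkey : ∀ (n : ℕ) (x y : X), (f x)⁻¹ * f y ∈ Gs n ↔ E (n + 1) x y := by
    intro n x y
    constructor
    · intro h
      by_contra hne'
      have hβn : β n x ≠ β n y := fun hb => hne' (hidx_eq n x y (hβ_eq n x y hb))
      set M := max (max (K x) (K y)) (n + 1) with hMdef
      have hMx : K x ≤ M := le_trans (le_max_left _ _) (le_max_left _ _)
      have hMy : K y ≤ M := le_trans (le_max_right _ _) (le_max_left _ _)
      have hMn : n + 1 ≤ M := le_max_right _ _
      have hβtail : ∀ m, M ≤ m → β m x = β m y := by
        intro m hm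
        have e1 : β m x = 0 := hK x m (Nat.le_succ_of_le (le_trans hMx hm))
        have e2 : β m y = 0 := hK y m (Nat.le_succ_of_le (le_trans hMy hm))
        rw [e1, e2]
      set m0 := Nat.findGreatest (fun m => β m x ≠ β m y) M with hm0def
      have hPm0 : β m0 x ≠ β m0 y := Nat.findGreatest_spec (P := fun m => β m x ≠ β m y) (show n ≤ M by omega) hβn
      have hm0n : n ≤ m0 := Nat.le_findGreatest (P := fun m => β m x ≠ β m y) (show n ≤ M by omega) hβn
      have hm0M : m0 ≤ M := Nat.findGreatest_le (P := fun m => β m x ≠ β m y) M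
      have hm0lt : m0 < M := by
        rcases eq_or_lt_of_le hm0M with he | hl
        · exact absurd (hβtail M le_rfl) (he ▸ hPm0)
        · exact hl
      have htail : ∀ m, m0 + 1 ≤ m → β m x = β m y := by
        intro m hm
        by_cases hmM : m ≤ M
        · by_contra hP
          exact Nat.findGreatest_is_greatest (P := fun m => β m x ≠ β m y) (by omega) hmM hP
        · exact hβtail m (by omega)
      have heq : (f x)⁻¹ * f y = (F (m0 + 1) x)⁻¹ * F (m0 + 1) y := by
        rw [hf x M hMx, hf y M hMy]
        exact hF_cancel (m0 + 1) x y htail M (by omega)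
      have hin : (F (m0 + 1) x)⁻¹ * F (m0 + 1) y ∈ Gs m0 := by
        rw [← heq]
        exact hmono hm0n h
      have hcc : (c m0 (β m0 x))⁻¹ * c m0 (β m0 y) ∈ Gs m0 := by
        have h1 := hF_mem m0 x
        have h2 := hF_mem m0 y
        rw [hF_succ, hF_succ] at hin
        have hrw : (c m0 (β m0 x))⁻¹ * c m0 (β m0 y)
            = F m0 x * ((c m0 (β m0 x) * F m0 x)⁻¹ * (c m0 (β m0 y) * F m0 y)) * (F m0 y)⁻¹ := by
          group
        rw [hrw]
        exact mul_mem (mul_mem h1 hin) (inv_mem h2)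
      exact hPm0 (hc3 m0 _ _ hcc)
    · intro h
      have hβall : ∀ m, n ≤ m → β m x = β m y :=
        fun m hm => hβ_congr m x y (hEmono (by omega) h)
      set M := max (max (K x) (K y)) n with hMdef
      rw [hf x M (le_trans (le_max_left _ _) (le_max_left _ _)),
        hf y M (le_trans (le_max_right _ _) (le_max_left _ _)),
        hF_cancel n x y hβall M (le_max_right _ _)]
      exact mul_mem (inv_mem (hF_mem n x)) (hF_mem n y)
  refine ⟨f, ?_, ?_⟩
  · -- uniformly bornologous
    intro R hR
    refine ⟨(⌈R⌉₊ : ℝ) + 2, by positivity, ?_⟩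
    intro x y hxy
    have hE : E (⌈R⌉₊ + 1 + 1) x y := by
      apply hEsingle
      have h1 : dist x y ≤ (⌈R⌉₊ : ℝ) := le_trans hxy (Nat.le_ceil R)
      push_cast
      linarith
    have hmem := (hkey (⌈R⌉₊ + 1) x y).mpr hE
    have hd := hdistG _ _ _ hmem
    calc dist (f x) (f y) ≤ ((⌈R⌉₊ + 1 : ℕ) : ℝ) + 1 := hd
      _ ≤ (⌈R⌉₊ : ℝ) + 2 := by push_cast; linarith
  · -- uniformly proper
    intro R hR
    obtain ⟨B, hB, hBspec⟩ := hA ((⌈R⌉₊ + 1 + 1 : ℕ) : ℝ) (by positivity)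
    refine ⟨max B 1, lt_of_lt_of_le hB (le_max_left _ _), ?_⟩
    intro x y hxy
    have hmem : (f x)⁻¹ * f y ∈ Gs (⌈R⌉₊ + 1) := by
      apply hdistG'
      calc dist (f x) (f y) ≤ R := hxy
        _ ≤ (⌈R⌉₊ : ℝ) := Nat.le_ceil R
        _ ≤ ((⌈R⌉₊ + 1 : ℕ) : ℝ) + 1 := by push_cast; linarith
    have hE := (hkey (⌈R⌉₊ + 1) x y).mp hmem
    exact le_trans (hBspec x y hE) (le_max_left _ _)
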